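/- Applying the Verlinde formula to the gauged modular data S^eq (normalized by 2μ) for three labels of type (Z,ε) gives: N_{(Z₁,ε₁),(Z₂,ε₂),(Z₃,ε₃)} = ½ N_{Z₁Z₂Z₃}(N_{Z₁Z₂Z₃} + ε₁ε₂ε₃), where N_{Z₁Z₂Z₃} = Σ_{W∈I} S'_{Z₁W} S'_{Z₂W} S'_{Z₃W} / (μ d_W) is the symmetric fusion multiplicity of the original theory. -/

import Mathlib

/-- Gauged labels of the ℤ/2 permutation gauging: unordered pairs `(XY)` with
`X ≠ Y` (modelled as pairs with `X < Y`), labels `(X,ε)`, and labels `(X̂,ε)`. -/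
abbrev GLabel (I : Type) [LinearOrder I] : Type :=
  {p : I × I // p.1 < p.2} ⊕ (I × Bool) ⊕ (I × Bool)

/-- The sign `ε ∈ {+1, -1}` as a complex number. -/
def sg (ε : Bool) : ℂ := if ε then 1 else -1

/-- The gauged S-matrix `S^eq`, defined blockwise from modular data
`(S', θ)`, a choice of square roots `θ^{1/2}`, `δ = √μ` and `η = p⁺/δ`. -/
noncomputable def gaugedS {I : Type} [LinearOrder I] [Fintype I]
    (S : Matrix I I ℂ) (θ sqrtθ : I → ℂ) (δ η : ℂ) :
    Matrix (GLabel I) (GLabel I) ℂ :=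
  Matrix.of fun a b =>
    match a, b with
    | Sum.inl p, Sum.inl q =>
        2 * (S p.1.1 q.1.1 * S p.1.2 q.1.2 + S p.1.1 q.1.2 * S p.1.2 q.1.1)
    | Sum.inl p, Sum.inr (Sum.inl (Z, _)) => 2 * S p.1.1 Z * S p.1.2 Z
    | Sum.inr (Sum.inl (X, _)), Sum.inl q => 2 * S X q.1.1 * S X q.1.2
    | Sum.inl _, Sum.inr (Sum.inr _) => 0
    | Sum.inr (Sum.inr _), Sum.inl _ => 0
    | Sum.inr (Sum.inl (X, _)), Sum.inr (Sum.inl (Y, _)) => (S X Y) ^ 2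
    | Sum.inr (Sum.inl (X, ε₁)), Sum.inr (Sum.inr (Y, _)) => sg ε₁ * δ * S X Y
    | Sum.inr (Sum.inr (X, _)), Sum.inr (Sum.inl (Y, ε₂)) => sg ε₂ * δ * S Y X
    | Sum.inr (Sum.inr (X, ε₁)), Sum.inr (Sum.inr (Y, ε₂)) =>
        sg ε₁ * sg ε₂ * η⁻¹ * sqrtθ X * sqrtθ Y * (∑ V, S X V * θ V ^ 2 * S V Y)

open Finset in
lemma two_mul_sum_pairs {I : Type} [LinearOrder I] [Fintype I] (f : I → ℂ) :
    2 * ∑ p : {p : I × I // p.1 < p.2}, f p.1.1 * f p.1.2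
      = (∑ x, f x) ^ 2 - ∑ x, f x ^ 2 := by
  classical
  have hsub : ∑ p : {p : I × I // p.1 < p.2}, f p.1.1 * f p.1.2
      = ∑ p ∈ univ.filter (fun p : I × I => p.1 < p.2), f p.1 * f p.2 :=
    (Finset.sum_subtype (univ.filter (fun p : I × I => p.1 < p.2))
      (by simp) (fun p : I × I => f p.1 * f p.2)).symm
  have hswap : ∑ p ∈ univ.filter (fun p : I × I => p.2 < p.1), f p.1 * f p.2
      = ∑ p ∈ univ.filter (fun p : I × I => p.1 < p.2), f p.1 * f p.2 := by
    refine Finset.sum_bij' (fun p _ => (p.2, p.1)) (fun p _ => (p.2, p.1)) ?_ ?_ ?_ ?_ ?_ <;>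
      simp [mul_comm]
  have hdiag : ∑ p ∈ univ.filter (fun p : I × I => p.1 = p.2), f p.1 * f p.2
      = ∑ x, f x ^ 2 := by
    refine Finset.sum_bij' (fun p _ => p.1) (fun x _ => (x, x)) ?_ ?_ ?_ ?_ ?_
    · simp
    · simp
    · intro p hp; simp only [mem_filter, mem_univ, true_and] at hp
      exact Prod.ext rfl hp
    · intro x _; rfl
    · intro p hp; simp only [mem_filter, mem_univ, true_and] at hp
      rw [← hp, sq]
  have htotal : ∑ p : I × I, f p.1 * f p.2 = (∑ x, f x) ^ 2 := by
    rw [Fintype.sum_prod_type, sq, Finset.sum_mul_sum]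
  have e1 := Finset.sum_filter_add_sum_filter_not (univ : Finset (I × I))
    (fun p => p.1 < p.2) (fun p => f p.1 * f p.2)
  have e2 := Finset.sum_filter_add_sum_filter_not
    (univ.filter (fun p : I × I => ¬ p.1 < p.2))
    (fun p => p.2 < p.1) (fun p => f p.1 * f p.2)
  have hf1 : (univ.filter (fun p : I × I => ¬ p.1 < p.2)).filter (fun p => p.2 < p.1)
      = univ.filter (fun p : I × I => p.2 < p.1) := by
    ext p
    simp only [mem_filter, mem_univ, true_and]
    exact ⟨fun h => h.2, fun h => ⟨not_lt.2 h.le, h⟩⟩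
  have hf2 : (univ.filter (fun p : I × I => ¬ p.1 < p.2)).filter (fun p => ¬ p.2 < p.1)
      = univ.filter (fun p : I × I => p.1 = p.2) := by
    ext p
    simp only [mem_filter, mem_univ, true_and, not_lt]
    exact ⟨fun h => le_antisymm h.2 h.1, fun h => ⟨h.ge, h.le⟩⟩
  rw [hf1, hf2, hswap, hdiag] at e2
  rw [htotal] at e1
  rw [hsub]
  linear_combination e1 + e2

/-- Gauged Verlinde formula for three labels of type `(Z,ε)`:
`N_{(Z₁,ε₁),(Z₂,ε₂),(Z₃,ε₃)} = ½ N_{Z₁Z₂Z₃}(N_{Z₁Z₂Z₃} + ε₁ε₂ε₃)` where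
`N_{Z₁Z₂Z₃} = Σ_W S'_{Z₁W}S'_{Z₂W}S'_{Z₃W}/(μ d_W)`. -/
theorem gauged_verlinde_diag {I : Type} [LinearOrder I] [Fintype I]
    (one : I) (bar : I → I) (S : Matrix I I ℂ) (d : I → ℝ) (δ : ℝ)
    (θ sqrtθ : I → ℂ) (η : ℂ)
    (hbar : ∀ X, bar (bar X) = X) (hbar1 : bar one = one)
    (hSsymm : S.IsSymm)
    (hd : ∀ X, 0 < d X) (hS1 : ∀ X, S one X = (d X : ℂ))
    (hδ : 0 < δ) (hδ2 : δ ^ 2 = ∑ X, d X ^ 2)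
    (hunit : S * S.conjTranspose = ((δ : ℂ) ^ 2) • 1)
    (hθ1 : θ one = 1) (hθbar : ∀ X, θ (bar X) = θ X) (hθne : ∀ X, θ X ≠ 0)
    (hη_def : η = (∑ X, θ X * (d X : ℂ) ^ 2) / (δ : ℂ))
    (hηabs : ‖η‖ = 1)
    (hs4 : S ^ 4 = ((δ : ℂ) ^ 4) • 1)
    (hst3 : (S * Matrix.diagonal θ) ^ 3 = (η⁻¹ * (δ : ℂ)) • S ^ 2)
    (hsqθ : ∀ X, sqrtθ X ^ 2 = θ X) (hsqθbar : ∀ X, sqrtθ (bar X) = sqrtθ X) :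
    ∀ (Z₁ Z₂ Z₃ : I) (ε₁ ε₂ ε₃ : Bool),
      ∑ ℓ : GLabel I,
          gaugedS S θ sqrtθ (δ : ℂ) η (Sum.inr (Sum.inl (Z₁, ε₁))) ℓ *
          gaugedS S θ sqrtθ (δ : ℂ) η (Sum.inr (Sum.inl (Z₂, ε₂))) ℓ *
          gaugedS S θ sqrtθ (δ : ℂ) η (Sum.inr (Sum.inl (Z₃, ε₃))) ℓ /
          ((2 * (δ : ℂ) ^ 2) ^ 2 *
            gaugedS S θ sqrtθ (δ : ℂ) η ℓ (Sum.inr (Sum.inl (one, true))))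
      = (∑ W, S Z₁ W * S Z₂ W * S Z₃ W / ((δ : ℂ) ^ 2 * (d W : ℂ))) *
          ((∑ W, S Z₁ W * S Z₂ W * S Z₃ W / ((δ : ℂ) ^ 2 * (d W : ℂ)))
            + sg ε₁ * sg ε₂ * sg ε₃) / 2 := by
  intro Z₁ Z₂ Z₃ ε₁ ε₂ ε₃
  have hδne : (δ : ℂ) ≠ 0 := Complex.ofReal_ne_zero.2 hδ.ne'
  have hdne : ∀ W, (d W : ℂ) ≠ 0 := fun W => Complex.ofReal_ne_zero.2 (hd W).ne'
  have hSone : ∀ X, S X one = (d X : ℂ) := fun X => (hSsymm.apply one X).trans (hS1 X)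
  set f : I → ℂ := fun W => S Z₁ W * S Z₂ W * S Z₃ W / ((δ : ℂ) ^ 2 * (d W : ℂ)) with hf
  rw [Fintype.sum_sum_type, Fintype.sum_sum_type]
  have hA : (∑ a : {p : I × I // p.1 < p.2},
      gaugedS S θ sqrtθ (δ : ℂ) η (Sum.inr (Sum.inl (Z₁, ε₁))) (Sum.inl a) *
      gaugedS S θ sqrtθ (δ : ℂ) η (Sum.inr (Sum.inl (Z₂, ε₂))) (Sum.inl a) *
      gaugedS S θ sqrtθ (δ : ℂ) η (Sum.inr (Sum.inl (Z₃, ε₃))) (Sum.inl a) /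
      ((2 * (δ : ℂ) ^ 2) ^ 2 *
        gaugedS S θ sqrtθ (δ : ℂ) η (Sum.inl a) (Sum.inr (Sum.inl (one, true)))))
      = ∑ a : {p : I × I // p.1 < p.2}, f a.1.1 * f a.1.2 := by
    refine Finset.sum_congr rfl fun a _ => ?_
    simp only [gaugedS, Matrix.of_apply, hf]
    rw [hSone, hSone]
    have h1 := hdne a.1.1
    have h2 := hdne a.1.2
    field_simp
  have hB : (∑ b : I × Bool,
      gaugedS S θ sqrtθ (δ : ℂ) η (Sum.inr (Sum.inl (Z₁, ε₁))) (Sum.inr (Sum.inl b)) *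
      gaugedS S θ sqrtθ (δ : ℂ) η (Sum.inr (Sum.inl (Z₂, ε₂))) (Sum.inr (Sum.inl b)) *
      gaugedS S θ sqrtθ (δ : ℂ) η (Sum.inr (Sum.inl (Z₃, ε₃))) (Sum.inr (Sum.inl b)) /
      ((2 * (δ : ℂ) ^ 2) ^ 2 *
        gaugedS S θ sqrtθ (δ : ℂ) η (Sum.inr (Sum.inl b)) (Sum.inr (Sum.inl (one, true)))))
      = (∑ x, f x ^ 2) / 2 := by
    rw [Fintype.sum_prod_type, Finset.sum_div]
    refine Finset.sum_congr rfl fun x _ => ?_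
    rw [Fintype.sum_bool]
    simp only [gaugedS, Matrix.of_apply, hf]
    rw [hSone]
    have h1 := hdne x
    field_simp
    ring
  have hC : (∑ c : I × Bool,
      gaugedS S θ sqrtθ (δ : ℂ) η (Sum.inr (Sum.inl (Z₁, ε₁))) (Sum.inr (Sum.inr c)) *
      gaugedS S θ sqrtθ (δ : ℂ) η (Sum.inr (Sum.inl (Z₂, ε₂))) (Sum.inr (Sum.inr c)) *
      gaugedS S θ sqrtθ (δ : ℂ) η (Sum.inr (Sum.inl (Z₃, ε₃))) (Sum.inr (Sum.inr c)) /
      ((2 * (δ : ℂ) ^ 2) ^ 2 *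
        gaugedS S θ sqrtθ (δ : ℂ) η (Sum.inr (Sum.inr c)) (Sum.inr (Sum.inl (one, true)))))
      = sg ε₁ * sg ε₂ * sg ε₃ * (∑ x, f x) / 2 := by
    rw [Fintype.sum_prod_type, mul_div_assoc, Finset.sum_div, Finset.mul_sum]
    refine Finset.sum_congr rfl fun x _ => ?_
    rw [Fintype.sum_bool]
    simp only [gaugedS, Matrix.of_apply, hf, show sg true = 1 from rfl]
    rw [hS1]
    have h1 := hdne x
    field_simp
    ring
  rw [hA, hB, hC]
  linear_combination (two_mul_sum_pairs f) / 2
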